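/- For a connected weighted graph, the effective resistance satisfies R(u,v) = (D^{-1} σ_u)_u - (D^{-1} σ_u)_v - (D^{-1} σ_v)_u + (D^{-1} σ_v)_v, where σ_u = (1/2) sum_{t=0}^∞ ( X^t 1_u - π ) with X the lazy random walk matrix and π the stationary distribution. -/

import Mathlib

open Matrix BigOperators

lemma quad_abs_le {n : ℕ} (A : Matrix (Fin n) (Fin n) ℝ) (hnn : ∀ i j, 0 ≤ A i j)
    (hsymm : ∀ i j, A i j = A j i) (z : Fin n → ℝ) :
    |∑ i, ∑ j, A i j * z i * z j| ≤ ∑ i, (∑ j, A i j) * z i ^ 2 := by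
  have h1 : |∑ i, ∑ j, A i j * z i * z j| ≤ ∑ i, ∑ j, A i j * ((z i ^2 + z j ^2)/2) := by
    refine (Finset.abs_sum_le_sum_abs _ _).trans ?_
    refine Finset.sum_le_sum fun i _ => ?_
    refine (Finset.abs_sum_le_sum_abs _ _).trans ?_
    refine Finset.sum_le_sum fun j _ => ?_
    rw [abs_mul, abs_mul, abs_of_nonneg (hnn i j), mul_assoc]
    refine mul_le_mul_of_nonneg_left ?_ (hnn i j)
    nlinarith [sq_nonneg (|z i| - |z j|), sq_abs (z i), sq_abs (z j)]
  refine h1.trans (le_of_eq ?_)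
  have h2 : ∀ i j, A i j * ((z i ^2 + z j ^2)/2) = A i j * z i^2/2 + A i j * z j^2/2 := by
    intro i j; ring
  simp only [h2, Finset.sum_add_distrib]
  have h3 : ∑ i, ∑ j, A i j * z i ^ 2 / 2 = ∑ i, (∑ j, A i j) * z i ^ 2 / 2 := by
    congr 1; funext i
    rw [← Finset.sum_div, ← Finset.sum_mul]
  have h4 : ∑ i, ∑ j, A i j * z j ^ 2 / 2 = ∑ i, (∑ j, A i j) * z i ^ 2 / 2 := by
    rw [Finset.sum_comm]
    congr 1; funext j
    rw [← Finset.sum_div, ← Finset.sum_mul]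
    congr 2
    exact Finset.sum_congr rfl fun i _ => hsymm i j
  rw [h3, h4]
  rw [← Finset.sum_add_distrib]
  congr 1; funext i; ring


lemma decay_aux {n : ℕ} (M : Matrix (Fin n) (Fin n) ℝ)
    (hherm : M.IsHermitian)
    (hpsd : ∀ x : Fin n → ℝ, 0 ≤ x ⬝ᵥ M.mulVec x)
    (hle : ∀ x : Fin n → ℝ, x ⬝ᵥ M.mulVec x ≤ x ⬝ᵥ x)
    (hfix : ∀ x : Fin n → ℝ, M.mulVec x = x → x = 0) :
    ∃ r : ℝ, 0 ≤ r ∧ r < 1 ∧ ∀ (t : ℕ) (i j : Fin n), |(M ^ t) i j| ≤ r ^ t := by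
  rcases Nat.eq_zero_or_pos n with hn | hn
  · exact ⟨1/2, by norm_num, by norm_num, fun t i j => absurd (i.2.trans_eq hn) (Nat.not_lt_zero _)⟩
  haveI : NeZero n := ⟨hn.ne'⟩
  set b := hherm.eigenvectorBasis with hb
  set μ := hherm.eigenvalues with hμ
  -- inner product = dot product
  have hinner : ∀ x y : EuclideanSpace ℝ (Fin n), @inner ℝ _ _ x y = (x : Fin n → ℝ) ⬝ᵥ (y : Fin n → ℝ) := by
    intro x y
    simp [PiLp.inner_apply, dotProduct, RCLike.inner_apply, mul_comm]
  have hww : ∀ k, (⇑(b k) : Fin n → ℝ) ⬝ᵥ ⇑(b k) = 1 := by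
    intro k
    have h1 := b.orthonormal.1 k
    have := hinner (b k) (b k)
    rw [real_inner_self_eq_norm_sq, h1] at this
    simpa using this.symm
  have hMw : ∀ k, M.mulVec ⇑(b k) = μ k • ⇑(b k) := fun k => hherm.mulVec_eigenvectorBasis k
  have hμ0 : ∀ k, 0 ≤ μ k := by
    intro k
    have := hpsd ⇑(b k)
    rw [hMw k, dotProduct_smul, hww k, smul_eq_mul, mul_one] at this
    exact this
  have hμlt : ∀ k, μ k < 1 := by
    intro k
    have hle1 : μ k ≤ 1 := by
      have := hle ⇑(b k)
      rwa [hMw k, dotProduct_smul, hww k, smul_eq_mul, mul_one] at this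
    rcases lt_or_eq_of_le hle1 with h | h
    · exact h
    · exfalso
      have : M.mulVec ⇑(b k) = ⇑(b k) := by rw [hMw k, h, one_smul]
      have h0 := hfix _ this
      have := hww k
      rw [h0] at this
      simp at this
  set r := Finset.univ.sup' (Finset.univ_nonempty) μ with hr
  have hr0 : 0 ≤ r := le_trans (hμ0 ⟨0, hn⟩) (Finset.le_sup' μ (Finset.mem_univ _))
  have hr1 : r < 1 := by
    rw [hr, Finset.sup'_lt_iff]
    intro k _
    exact hμlt k
  have hμr : ∀ k, μ k ≤ r := fun k => Finset.le_sup' μ (Finset.mem_univ k)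
  refine ⟨r, hr0, hr1, ?_⟩
  -- spectral theorem for powers
  set U : Matrix (Fin n) (Fin n) ℝ := (hherm.eigenvectorUnitary : Matrix (Fin n) (Fin n) ℝ) with hU
  have hUU : U * star U = 1 := by
    have := hherm.eigenvectorUnitary.2
    rw [Unitary.mem_iff] at this
    exact this.2
  have hUU' : star U * U = 1 := by
    have := hherm.eigenvectorUnitary.2
    rw [Unitary.mem_iff] at this
    exact this.1
  have hspec : M = U * Matrix.diagonal μ * star U := by
    have := hherm.spectral_theorem
    simpa using this
  have hpow : ∀ t : ℕ, M ^ t = U * Matrix.diagonal (fun k => μ k ^ t) * star U := by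
    intro t
    induction t with
    | zero => simp [hUU]
    | succ t ih =>
      rw [pow_succ, ih, hspec]
      simp only [Matrix.mul_assoc]
      rw [← Matrix.mul_assoc (star U) U, hUU', Matrix.one_mul,
        ← Matrix.mul_assoc (Matrix.diagonal fun k => μ k ^ t) (Matrix.diagonal μ),
        Matrix.diagonal_mul_diagonal,
        show (fun i => μ i ^ t * μ i) = fun k => μ k ^ (t+1) from funext fun k => (pow_succ _ _).symm]
  have hrow : ∀ i, ∑ k, (U i k)^2 = 1 := by
    intro i
    have h := congrFun (congrFun hUU i) i
    rw [Matrix.mul_apply, Matrix.one_apply_eq] at h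
    rw [← h]
    congr 1
    funext k
    rw [Matrix.star_apply, star_trivial, sq]
  intro t i j
  have hentry : (M ^ t) i j = ∑ k, U i k * μ k ^ t * U j k := by
    rw [hpow t, Matrix.mul_apply]
    congr 1
    funext k
    rw [Matrix.mul_apply, Matrix.star_apply, star_trivial]
    rw [Finset.sum_mul]
    rw [Finset.sum_eq_single k]
    · rw [Matrix.diagonal_apply_eq]
    · intro l _ hl
      rw [Matrix.diagonal_apply_ne _ hl]
      ring
    · intro h
      exact absurd (Finset.mem_univ k) h
  rw [hentry]
  have hCS : ∑ k, |U i k| * |U j k| ≤ 1 := by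
    have h := Finset.sum_mul_sq_le_sq_mul_sq Finset.univ (fun k => |U i k|) (fun k => |U j k|)
    have h1 : ∑ k, |U i k|^2 = 1 := by simpa [sq_abs] using hrow i
    have h2 : ∑ k, |U j k|^2 = 1 := by simpa [sq_abs] using hrow j
    rw [h1, h2, mul_one] at h
    have h3 : (0:ℝ) ≤ ∑ k, |U i k| * |U j k| :=
      Finset.sum_nonneg fun k _ => mul_nonneg (abs_nonneg _) (abs_nonneg _)
    nlinarith [h, h3]
  calc |∑ k, U i k * μ k ^ t * U j k| ≤ ∑ k, |U i k * μ k ^ t * U j k| :=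
        Finset.abs_sum_le_sum_abs _ _
    _ ≤ ∑ k, |U i k| * |U j k| * r ^ t := by
        apply Finset.sum_le_sum
        intro k _
        rw [abs_mul, abs_mul]
        have h1 : |μ k ^ t| ≤ r ^ t := by
          rw [abs_pow, abs_of_nonneg (hμ0 k)]
          exact pow_le_pow_left₀ (hμ0 k) (hμr k) t
        calc |U i k| * |μ k ^ t| * |U j k| = |U i k| * |U j k| * |μ k ^ t| := by ring
          _ ≤ |U i k| * |U j k| * r ^ t := by
              apply mul_le_mul_of_nonneg_left h1 (by positivity)
    _ = (∑ k, |U i k| * |U j k|) * r ^ t := by rw [Finset.sum_mul]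
    _ ≤ 1 * r ^ t := by
        apply mul_le_mul_of_nonneg_right hCS (by positivity)
    _ = r ^ t := one_mul _


theorem effective_resistance_from_sigma (n : ℕ) (A : Matrix (Fin n) (Fin n) ℝ)
    (hsym : A.IsSymm) (hnonneg : ∀ i j, 0 ≤ A i j) (hloop : ∀ i, A i i = 0)
    (hdpos : ∀ i, 0 < ∑ j, A i j)
    (L : Matrix (Fin n) (Fin n) ℝ)
    (hL : L = Matrix.diagonal (fun i => ∑ j, A i j) - A)
    (hker : ∀ x : Fin n → ℝ, L.mulVec x = 0 → ∃ c : ℝ, ∀ i, x i = c)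
    (Lp : Matrix (Fin n) (Fin n) ℝ)
    (hmp1 : L * Lp * L = L) (hmp2 : Lp * L * Lp = Lp)
    (hmp3 : (L * Lp).IsSymm) (hmp4 : (Lp * L).IsSymm)
    (X : Matrix (Fin n) (Fin n) ℝ)
    (hX : X = (1 / 2 : ℝ) • (1 : Matrix (Fin n) (Fin n) ℝ)
        + (1 / 2 : ℝ) • (A * Matrix.diagonal (fun i => (∑ j, A i j)⁻¹)))
    (pi : Fin n → ℝ) (hpi : pi = fun i => (∑ j, A i j) / ∑ i, ∑ j, A i j)
    (sigma : Fin n → Fin n → ℝ)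
    (hsigma : sigma = fun w =>
      (1 / 2 : ℝ) • ∑' t : ℕ, ((X ^ t).mulVec (Pi.single w 1) - pi))
    (u v : Fin n) :
    (Pi.single u 1 - Pi.single v 1) ⬝ᵥ Lp.mulVec (Pi.single u 1 - Pi.single v 1)
      = ((Matrix.diagonal (fun i => (∑ j, A i j)⁻¹)).mulVec (sigma u)) u
        - ((Matrix.diagonal (fun i => (∑ j, A i j)⁻¹)).mulVec (sigma u)) v
        - ((Matrix.diagonal (fun i => (∑ j, A i j)⁻¹)).mulVec (sigma v)) u
        + ((Matrix.diagonal (fun i => (∑ j, A i j)⁻¹)).mulVec (sigma v)) v := by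
  have hn : 0 < n := u.pos
  -- basic quantities
  set d : Fin n → ℝ := fun i => ∑ j, A i j with hd
  set Dinv : Matrix (Fin n) (Fin n) ℝ := Matrix.diagonal (fun i => (d i)⁻¹) with hDinv
  have hdne : ∀ i, d i ≠ 0 := fun i => (hdpos i).ne'
  set S : ℝ := ∑ i, d i with hS
  have hSpos : 0 < S := Finset.sum_pos (fun i _ => hdpos i) ⟨u, Finset.mem_univ u⟩
  set s : Fin n → ℝ := fun i => Real.sqrt (d i) with hsdef
  have hspos : ∀ i, 0 < s i := fun i => Real.sqrt_pos.2 (hdpos i)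
  have hsne : ∀ i, s i ≠ 0 := fun i => (hspos i).ne'
  have hss : ∀ i, s i * s i = d i := fun i => Real.mul_self_sqrt (hdpos i).le
  set Dh : Matrix (Fin n) (Fin n) ℝ := Matrix.diagonal s with hDh
  set Dhinv : Matrix (Fin n) (Fin n) ℝ := Matrix.diagonal (fun i => (s i)⁻¹) with hDhinv
  set p : Fin n → ℝ := fun i => s i / Real.sqrt S with hp
  set B : Matrix (Fin n) (Fin n) ℝ := Dhinv * A * Dhinv with hB
  set N : Matrix (Fin n) (Fin n) ℝ := (1/2 : ℝ) • 1 + (1/2 : ℝ) • B with hN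
  set P : Matrix (Fin n) (Fin n) ℝ := Matrix.vecMulVec p p with hP
  set Mm : Matrix (Fin n) (Fin n) ℝ := N - P with hMm
  set Q : Matrix (Fin n) (Fin n) ℝ := Matrix.of (fun i _ : Fin n => pi i) with hQ
  set Y : Matrix (Fin n) (Fin n) ℝ := X - Q with hY
  set e : Fin n → Fin n → ℝ := fun w => Pi.single w 1 with he
  -- diagonal computations
  have hDhDhinv : Dh * Dhinv = 1 := by
    rw [hDh, hDhinv, Matrix.diagonal_mul_diagonal,
      show (fun i => s i * (s i)⁻¹) = fun _ : Fin n => (1:ℝ) from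
        funext fun i => mul_inv_cancel₀ (hsne i), Matrix.diagonal_one]
  have hDhinvDh : Dhinv * Dh = 1 := by
    rw [hDh, hDhinv, Matrix.diagonal_mul_diagonal,
      show (fun i => (s i)⁻¹ * s i) = fun _ : Fin n => (1:ℝ) from
        funext fun i => inv_mul_cancel₀ (hsne i), Matrix.diagonal_one]
  have hDhinv2 : Dhinv * Dhinv = Dinv := by
    rw [hDinv, hDhinv, Matrix.diagonal_mul_diagonal,
      show (fun i => (s i)⁻¹ * (s i)⁻¹) = fun i => (d i)⁻¹ from
        funext fun i => by rw [← mul_inv, hss i]]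
  -- structural identities
  have hXN : X = Dh * N * Dhinv := by
    have hDAD : Dh * B * Dhinv = A * Dinv := by
      rw [hB]
      simp only [← Matrix.mul_assoc]
      rw [hDhDhinv, Matrix.one_mul, Matrix.mul_assoc, hDhinv2]
    rw [hN, Matrix.mul_add, Matrix.add_mul, Matrix.mul_smul, Matrix.smul_mul, Matrix.mul_one,
      hDhDhinv, Matrix.mul_smul, Matrix.smul_mul, hDAD, hX]
  have hSS : Real.sqrt S * Real.sqrt S = S := Real.mul_self_sqrt hSpos.le
  have hps : ∀ i j : Fin n, p i * p j = s i * s j / S := by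
    intro i j
    simp only [hp]
    rw [div_mul_div_comm, hSS]
  have hQP : Q = Dh * P * Dhinv := by
    ext i j
    rw [hDh, hDhinv, hP, Matrix.mul_diagonal, Matrix.diagonal_mul, Matrix.vecMulVec_apply]
    show pi i = _
    rw [hpi, hps]
    have : s i * (s i * s j / S) * (s j)⁻¹ = (s i * s i) * (s j * (s j)⁻¹) / S := by ring
    rw [this, mul_inv_cancel₀ (hsne j), hss i, mul_one]
  have hYM : Y = Dh * Mm * Dhinv := by
    rw [hY, hMm, Matrix.mul_sub, Matrix.sub_mul, ← hXN, ← hQP]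
  have hYt : ∀ t : ℕ, Y ^ t = Dh * Mm ^ t * Dhinv := by
    intro t
    induction t with
    | zero => rw [pow_zero, pow_zero, Matrix.mul_one, hDhDhinv]
    | succ t ih =>
      rw [pow_succ, pow_succ, ih, hYM]
      simp only [Matrix.mul_assoc]
      rw [← Matrix.mul_assoc Dhinv Dh, hDhinvDh, Matrix.one_mul]
  -- properties of Mm
  have hBsymm : B.IsSymm := by
    show Bᵀ = B
    rw [hB, Matrix.transpose_mul, Matrix.transpose_mul, Matrix.diagonal_transpose, hsym.eq,
      Matrix.mul_assoc]
  have hNsymm : N.IsSymm := by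
    show Nᵀ = N
    rw [hN, Matrix.transpose_add, Matrix.transpose_smul, Matrix.transpose_smul,
      Matrix.transpose_one, hBsymm.eq]
  have hMsymm : Mm.IsSymm := by
    show Mmᵀ = Mm
    rw [hMm, Matrix.transpose_sub, hNsymm.eq, hP]
    congr 1
    ext i j
    rw [Matrix.transpose_apply, Matrix.vecMulVec_apply, Matrix.vecMulVec_apply, mul_comm]
  have hMherm : Mm.IsHermitian := hMsymm
  have hBapp : ∀ i j, B i j = (s i)⁻¹ * A i j * (s j)⁻¹ := by
    intro i j
    rw [hB, Matrix.mul_diagonal, Matrix.diagonal_mul]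
  have hsymA : ∀ i j, A i j = A j i := fun i j => congrFun (congrFun hsym.eq j) i
  have hBquad : ∀ x : Fin n → ℝ, |x ⬝ᵥ B.mulVec x| ≤ x ⬝ᵥ x := by
    intro x
    set z : Fin n → ℝ := fun i => x i * (s i)⁻¹ with hz
    have h1 : x ⬝ᵥ B.mulVec x = ∑ i, ∑ j, A i j * z i * z j := by
      rw [dotProduct, Finset.sum_congr rfl]
      intro i _
      rw [Matrix.mulVec, dotProduct, Finset.mul_sum, Finset.sum_congr rfl]
      intro j _
      rw [hBapp, hz]
      ring
    have h2 := quad_abs_le A hnonneg hsymA z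
    rw [h1]
    refine h2.trans (le_of_eq ?_)
    rw [dotProduct]
    refine Finset.sum_congr rfl fun i _ => ?_
    have hzi : z i ^ 2 = x i ^ 2 * (d i)⁻¹ := by
      rw [hz]
      have : ((s i)⁻¹) ^ 2 = (d i)⁻¹ := by
        rw [← hss i, sq, mul_inv]
      rw [mul_pow, this]
    rw [hzi]
    have h5 : d i * (x i ^ 2 * (d i)⁻¹) = x i ^ 2 * (d i * (d i)⁻¹) := by ring
    rw [h5, mul_inv_cancel₀ (hdne i), mul_one, sq]
  have hBp : B.mulVec p = p := by
    funext i
    rw [Matrix.mulVec, dotProduct]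
    have hterm : ∀ j, B i j * p j = (s i)⁻¹ / Real.sqrt S * A i j := by
      intro j
      rw [hBapp]
      simp only [hp]
      have h5 : (s i)⁻¹ * A i j * (s j)⁻¹ * (s j / Real.sqrt S)
          = (s i)⁻¹ / Real.sqrt S * A i j * ((s j)⁻¹ * s j) := by ring
      rw [h5, inv_mul_cancel₀ (hsne j), mul_one]
    rw [Finset.sum_congr rfl fun j _ => hterm j, ← Finset.mul_sum]
    show (s i)⁻¹ / Real.sqrt S * d i = p i
    simp only [hp]
    rw [← hss i]
    have h5 : (s i)⁻¹ / Real.sqrt S * (s i * s i) = ((s i)⁻¹ * s i) * s i / Real.sqrt S := by ring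
    rw [h5, inv_mul_cancel₀ (hsne i), one_mul]
  have hNp : N.mulVec p = p := by
    rw [hN, Matrix.add_mulVec, Matrix.smul_mulVec, Matrix.smul_mulVec,
      Matrix.one_mulVec, hBp, ← add_smul]
    norm_num
  have hpp : p ⬝ᵥ p = 1 := by
    rw [dotProduct]
    have : ∀ i, p i * p i = d i / S := by
      intro i
      rw [hps, hss]
    rw [Finset.sum_congr rfl fun i _ => this i, ← Finset.sum_div, div_self hSpos.ne']
  have hPx : ∀ x : Fin n → ℝ, P.mulVec x = (p ⬝ᵥ x) • p := by
    intro x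
    funext i
    rw [Matrix.mulVec, dotProduct, Pi.smul_apply, dotProduct, smul_eq_mul,
      Finset.sum_mul]
    refine Finset.sum_congr rfl fun j _ => ?_
    rw [hP, Matrix.vecMulVec_apply]
    ring
  have hNquad : ∀ x : Fin n → ℝ, x ⬝ᵥ N.mulVec x
      = (1/2 : ℝ) * (x ⬝ᵥ x) + (1/2 : ℝ) * (x ⬝ᵥ B.mulVec x) := by
    intro x
    rw [hN, Matrix.add_mulVec, Matrix.smul_mulVec, Matrix.smul_mulVec,
      Matrix.one_mulVec, dotProduct_add, dotProduct_smul, dotProduct_smul,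
      smul_eq_mul, smul_eq_mul]
  have hNquad0 : ∀ x : Fin n → ℝ, 0 ≤ x ⬝ᵥ N.mulVec x := by
    intro x
    rw [hNquad]
    have := abs_le.1 (hBquad x)
    linarith [this.1]
  have hNquad1 : ∀ x : Fin n → ℝ, x ⬝ᵥ N.mulVec x ≤ x ⬝ᵥ x := by
    intro x
    rw [hNquad]
    have := abs_le.1 (hBquad x)
    linarith [this.2]
  have hNbil : ∀ y z : Fin n → ℝ, y ⬝ᵥ N.mulVec z = N.mulVec y ⬝ᵥ z := by
    intro y z
    rw [Matrix.dotProduct_mulVec]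
    congr 1
    rw [← Matrix.mulVec_transpose, hNsymm.eq]
  have hMquad : ∀ x : Fin n → ℝ,
      x ⬝ᵥ Mm.mulVec x = (x - (p ⬝ᵥ x) • p) ⬝ᵥ N.mulVec (x - (p ⬝ᵥ x) • p) ∧
      (x - (p ⬝ᵥ x) • p) ⬝ᵥ (x - (p ⬝ᵥ x) • p) = x ⬝ᵥ x - (p ⬝ᵥ x)^2 := by
    intro x
    have hxp : x ⬝ᵥ p = p ⬝ᵥ x := dotProduct_comm x p
    have hpNx : p ⬝ᵥ N.mulVec x = p ⬝ᵥ x := by rw [hNbil, hNp]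
    have hxNp : x ⬝ᵥ N.mulVec p = p ⬝ᵥ x := by rw [hNp, hxp]
    constructor
    · rw [hMm, Matrix.sub_mulVec, hPx]
      simp only [Matrix.mulVec_sub, Matrix.mulVec_smul, hNp, dotProduct_sub,
        sub_dotProduct, dotProduct_smul, smul_dotProduct, smul_eq_mul,
        hpNx, hxp, hpp]
      ring
    · simp only [dotProduct_sub, sub_dotProduct, dotProduct_smul,
        smul_dotProduct, smul_eq_mul, hxp, hpp]
      ring
  have hpsd : ∀ x : Fin n → ℝ, 0 ≤ x ⬝ᵥ Mm.mulVec x := by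
    intro x
    rw [(hMquad x).1]
    exact hNquad0 _
  have hle : ∀ x : Fin n → ℝ, x ⬝ᵥ Mm.mulVec x ≤ x ⬝ᵥ x := by
    intro x
    rw [(hMquad x).1]
    refine (hNquad1 _).trans ?_
    rw [(hMquad x).2]
    exact sub_le_self _ (sq_nonneg _)
  have hfix : ∀ x : Fin n → ℝ, Mm.mulVec x = x → x = 0 := by
    intro x hx
    have h1 : x ⬝ᵥ Mm.mulVec x = x ⬝ᵥ x := by rw [hx]
    have h2 := (hMquad x).1
    have h3 := (hMquad x).2
    have hyy : (x - (p ⬝ᵥ x) • p) ⬝ᵥ N.mulVec (x - (p ⬝ᵥ x) • p) ≤ x ⬝ᵥ x - (p ⬝ᵥ x)^2 := by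
      rw [← h3]; exact hNquad1 _
    have hc0 : p ⬝ᵥ x = 0 := by nlinarith [sq_nonneg (p ⬝ᵥ x)]
    have hy : x - (p ⬝ᵥ x) • p = x := by rw [hc0, zero_smul, sub_zero]
    have hNx : x ⬝ᵥ N.mulVec x = x ⬝ᵥ x := by
      rw [← h1, h2, hy]
    -- 1 - N is PSD
    have hKsymm : ((1 : Matrix (Fin n) (Fin n) ℝ) - N).IsSymm := by
      show _ᵀ = _
      rw [Matrix.transpose_sub, Matrix.transpose_one, hNsymm.eq]
    have hKpsd : Matrix.PosSemidef ((1 : Matrix (Fin n) (Fin n) ℝ) - N) := by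
      refine .of_dotProduct_mulVec_nonneg hKsymm fun y => ?_
      have h4 := hNquad1 y
      have h5 : star y = y := by funext i; simp
      rw [h5, Matrix.sub_mulVec, Matrix.one_mulVec, dotProduct_sub]
      simpa using sub_nonneg.2 h4
    have h0 : star x ⬝ᵥ ((1 : Matrix (Fin n) (Fin n) ℝ) - N).mulVec x = 0 := by
      have h5 : star x = x := by funext i; simp
      rw [h5, Matrix.sub_mulVec, Matrix.one_mulVec, dotProduct_sub, hNx, sub_self]
    have hK0 := (hKpsd.dotProduct_mulVec_zero_iff x).1 h0
    have hNfix : N.mulVec x = x := by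
      have h6 : x - N.mulVec x = 0 := by
        have h7 : ((1 : Matrix (Fin n) (Fin n) ℝ) - N).mulVec x = x - N.mulVec x := by
          rw [Matrix.sub_mulVec, Matrix.one_mulVec]
        rw [← h7, hK0]
      exact (sub_eq_zero.1 h6).symm
    have hBfix : B.mulVec x = x := by
      have h7 : (1/2 : ℝ) • x + (1/2 : ℝ) • B.mulVec x = x := by
        conv_rhs => rw [← hNfix]
        rw [hN, Matrix.add_mulVec, Matrix.smul_mulVec, Matrix.smul_mulVec,
          Matrix.one_mulVec]
      have h8 : (1/2 : ℝ) • B.mulVec x = (1/2 : ℝ) • x := by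
        have := congrArg (fun z => z - (1/2 : ℝ) • x) h7
        rw [add_sub_cancel_left] at this
        rw [this]
        module
      have := smul_right_injective (Fin n → ℝ) (by norm_num : (1/2 : ℝ) ≠ 0) h8
      exact this
    have hLB : L = Dh * ((1 : Matrix (Fin n) (Fin n) ℝ) - B) * Dh := by
      have hDD : Dh * Dh = Matrix.diagonal d := by
        rw [hDh, Matrix.diagonal_mul_diagonal,
          show (fun i => s i * s i) = d from funext hss]
      have hDBD : Dh * B * Dh = A := by
        rw [hB]
        simp only [← Matrix.mul_assoc]
        rw [hDhDhinv, Matrix.one_mul, Matrix.mul_assoc, hDhinvDh, Matrix.mul_one]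
      rw [Matrix.mul_sub, Matrix.sub_mul, Matrix.mul_one, hDD, hDBD, hL]
    have hLx : L.mulVec (Dhinv.mulVec x) = 0 := by
      rw [Matrix.mulVec_mulVec, hLB]
      have h12 : Dh * ((1 : Matrix (Fin n) (Fin n) ℝ) - B) * Dh * Dhinv
          = Dh * ((1 : Matrix (Fin n) (Fin n) ℝ) - B) := by
        rw [Matrix.mul_assoc (Dh * ((1 : Matrix (Fin n) (Fin n) ℝ) - B)) Dh Dhinv, hDhDhinv,
          Matrix.mul_one]
      have h13 : ((1 : Matrix (Fin n) (Fin n) ℝ) - B).mulVec x = 0 := by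
        rw [Matrix.sub_mulVec, Matrix.one_mulVec, hBfix, sub_self]
      rw [h12, ← Matrix.mulVec_mulVec, h13, Matrix.mulVec_zero]
    obtain ⟨c₀, hc₀⟩ := hker _ hLx
    have hx' : ∀ i, x i = c₀ * s i := by
      intro i
      have h9 := hc₀ i
      rw [hDhinv, Matrix.mulVec_diagonal] at h9
      have h10 := congrArg (fun z => s i * z) h9
      rw [← mul_assoc, mul_inv_cancel₀ (hsne i), one_mul] at h10
      rw [h10, mul_comm]
    have hcc : p ⬝ᵥ x = c₀ * Real.sqrt S := by
      rw [dotProduct]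
      have h11 : ∀ i, p i * x i = c₀ * d i / Real.sqrt S := by
        intro i
        rw [hx' i]
        simp only [hp]
        rw [← hss i]
        ring
      rw [Finset.sum_congr rfl fun i _ => h11 i, ← Finset.sum_div, ← Finset.mul_sum]
      rw [show (∑ i, d i) = S from rfl]
      rw [mul_div_assoc, Real.div_sqrt]
    have hc₀0 : c₀ = 0 := by
      rw [hcc] at hc0
      rcases mul_eq_zero.1 hc0 with h | h
      · exact h
      · exact absurd h (Real.sqrt_ne_zero'.2 hSpos)
    funext i
    rw [hx' i, hc₀0, zero_mul]
    rfl
  obtain ⟨r, hr0, hr1, hrent⟩ := decay_aux Mm hMherm hpsd hle hfix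
  -- entry bounds on Y powers
  have hYent : ∀ (t : ℕ) (i j : Fin n), |(Y ^ t) i j| ≤ s i * (s j)⁻¹ * r ^ t := by
    intro t i j
    have h1 : (Y ^ t) i j = s i * (Mm ^ t) i j * (s j)⁻¹ := by
      rw [hYt t, hDh, hDhinv, Matrix.mul_diagonal, Matrix.diagonal_mul]
    rw [h1, abs_mul, abs_mul, abs_of_pos (hspos i), abs_of_pos (inv_pos.2 (hspos j))]
    calc s i * |(Mm ^ t) i j| * (s j)⁻¹ ≤ s i * r ^ t * (s j)⁻¹ := by
          have := hrent t i j
          gcongr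
      _ = s i * (s j)⁻¹ * r ^ t := by ring
  have hYmv : ∀ (Z : Matrix (Fin n) (Fin n) ℝ) (w : Fin n), Z.mulVec (e w) = fun i => Z i w := by
    intro Z w
    funext i
    rw [he]
    simp [Matrix.mulVec_single]
  -- summability
  have hsummable : ∀ w, Summable (fun t : ℕ => (Y ^ (t+1)).mulVec (e w)) := by
    intro w
    rw [Pi.summable]
    intro i
    refine Summable.of_norm_bounded
      ((summable_geometric_of_lt_one hr0 hr1).mul_left (s i * (s w)⁻¹ * r)) ?_
    intro t
    rw [hYmv]
    show |(Y ^ (t+1)) i w| ≤ _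
    calc |(Y ^ (t+1)) i w| ≤ s i * (s w)⁻¹ * r ^ (t+1) := hYent (t+1) i w
      _ = s i * (s w)⁻¹ * r * r ^ t := by ring
  -- matrix identities involving Q
  have hQe : ∀ w, Q.mulVec (e w) = pi := by
    intro w
    rw [hYmv]
    funext i
    rfl
  have hpisum : ∑ i, pi i = 1 := by
    rw [hpi]
    rw [← Finset.sum_div]
    exact div_self hSpos.ne'
  have hDpi : Dinv.mulVec pi = fun _ => S⁻¹ := by
    funext i
    rw [hDinv, Matrix.mulVec_diagonal, hpi]
    show (d i)⁻¹ * (d i / S) = S⁻¹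
    rw [div_eq_mul_inv, ← mul_assoc, inv_mul_cancel₀ (hdne i), one_mul]
  have hXpi : X.mulVec pi = pi := by
    rw [hX, Matrix.add_mulVec, Matrix.smul_mulVec, Matrix.smul_mulVec,
      Matrix.one_mulVec, ← Matrix.mulVec_mulVec, hDpi]
    have hApi : A.mulVec (fun _ => S⁻¹) = pi := by
      funext i
      show ∑ j, A i j * S⁻¹ = pi i
      rw [← Finset.sum_mul, hpi]
      show d i * S⁻¹ = d i / S
      rw [div_eq_mul_inv]
    rw [hApi, ← add_smul]
    norm_num
  have hXQ : X * Q = Q := by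
    ext i j
    rw [Matrix.mul_apply]
    have : ∑ k, X i k * Q k j = (X.mulVec pi) i := by
      rw [Matrix.mulVec, dotProduct]
      rfl
    rw [this, hXpi]
    rfl
  have hcol : ∀ j, ∑ k, X k j = 1 := by
    intro j
    rw [hX]
    simp only [Matrix.add_apply, Matrix.smul_apply, smul_eq_mul]
    rw [Finset.sum_add_distrib, ← Finset.mul_sum, ← Finset.mul_sum]
    have h1 : ∑ k, (1 : Matrix (Fin n) (Fin n) ℝ) k j = 1 := by
      simp [Matrix.one_apply]
    have h2 : ∑ k, (A * Dinv) k j = 1 := by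
      have : ∀ k, (A * Dinv) k j = A k j * (d j)⁻¹ := by
        intro k
        rw [hDinv, Matrix.mul_diagonal]
      rw [Finset.sum_congr rfl fun k _ => this k, ← Finset.sum_mul]
      have h3 : ∑ k, A k j = d j := by
        rw [Finset.sum_congr rfl fun k (_ : k ∈ Finset.univ) => hsymA k j]
      rw [h3, mul_inv_cancel₀ (hdne j)]
    rw [h1, h2]
    norm_num
  have hQX : Q * X = Q := by
    ext i j
    rw [Matrix.mul_apply]
    have : ∀ k, Q i k * X k j = pi i * X k j := fun k => rfl
    rw [Finset.sum_congr rfl fun k _ => this k, ← Finset.mul_sum, hcol, mul_one]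
    rfl
  have hQQ : Q * Q = Q := by
    ext i j
    rw [Matrix.mul_apply]
    have : ∀ k, Q i k * Q k j = pi i * pi k := fun k => rfl
    rw [Finset.sum_congr rfl fun k _ => this k, ← Finset.mul_sum, hpisum, mul_one]
    rfl
  have hXtQ : ∀ t : ℕ, X ^ t * Q = Q := by
    intro t
    induction t with
    | zero => rw [pow_zero, Matrix.one_mul]
    | succ t ih => rw [pow_succ, Matrix.mul_assoc, hXQ, ih]
  have hQY : Q * Y = 0 := by rw [hY, Matrix.mul_sub, hQX, hQQ, sub_self]
  have hYXQ : ∀ t : ℕ, Y ^ (t+1) = X ^ (t+1) - Q := by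
    intro t
    induction t with
    | zero => rw [pow_one, pow_one, hY]
    | succ t ih =>
      have h2 : Y ^ (t+1+1) = (X ^ (t+1) - Q) * (X - Q) := by rw [pow_succ, ih, hY]
      rw [h2, Matrix.sub_mul, Matrix.mul_sub, Matrix.mul_sub, hXtQ, hQX, hQQ, ← pow_succ]
      abel
  have hXY : ∀ t : ℕ, X * Y ^ (t+1) = Y ^ (t+2) := by
    intro t
    rw [hYXQ t, hYXQ (t+1), Matrix.mul_sub, hXQ, ← pow_succ']
  -- sigma in terms of F
  set F : Fin n → Fin n → ℝ := fun w => ∑' t : ℕ, (Y ^ (t+1)).mulVec (e w) with hF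
  have hterm : ∀ w (t : ℕ), (X ^ (t+1)).mulVec (e w) - pi = (Y ^ (t+1)).mulVec (e w) := by
    intro w t
    rw [hYXQ t, Matrix.sub_mulVec, hQe]
  have hsig : ∀ w, sigma w = (1/2 : ℝ) • ((e w - pi) + F w) := by
    intro w
    have hsum : Summable (fun t : ℕ => (X ^ t).mulVec (e w) - pi) := by
      rw [← summable_nat_add_iff 1]
      simp only [hterm w]
      exact hsummable w
    have h1 : sigma w = (1/2 : ℝ) • ∑' t : ℕ, ((X ^ t).mulVec (e w) - pi) := by
      rw [hsigma]
    rw [h1, Summable.tsum_eq_zero_add hsum]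
    congr 1
    congr 1
    · rw [pow_zero, Matrix.one_mulVec]
    · exact tsum_congr fun t => hterm w t
  -- the key identity
  have hDD1 : Matrix.diagonal d * Dinv = 1 := by
    rw [hDinv, Matrix.diagonal_mul_diagonal,
      show (fun i => d i * (d i)⁻¹) = fun _ : Fin n => (1:ℝ) from
        funext fun i => mul_inv_cancel₀ (hdne i), Matrix.diagonal_one]
  have hAD : A * Dinv = (2:ℝ) • X - 1 := by
    rw [hX, smul_add, smul_smul, smul_smul]
    norm_num
  have hLD : L * Dinv = (2:ℝ) • (1 : Matrix (Fin n) (Fin n) ℝ) - (2:ℝ) • X := by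
    rw [hL, Matrix.sub_mul, hDD1, hAD]
    module
  have hkey : ∀ w, L.mulVec (Dinv.mulVec (sigma w)) = e w - pi := by
    intro w
    have hTXF : X.mulVec (F w) = F w - Y.mulVec (e w) := by
      have hFw : F w = ∑' t : ℕ, (Y ^ (t+1)).mulVec (e w) := rfl
      have hmap : X.mulVec (F w) = ∑' t : ℕ, X.mulVec ((Y ^ (t+1)).mulVec (e w)) := by
        have h := (LinearMap.toContinuousLinearMap (Matrix.mulVecLin X)).map_tsum (hsummable w)
        rw [hFw]
        simpa [Matrix.mulVecLin_apply] using h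
      have hstep : ∀ t : ℕ, X.mulVec ((Y ^ (t+1)).mulVec (e w)) = (Y ^ (t+2)).mulVec (e w) := by
        intro t
        rw [Matrix.mulVec_mulVec, hXY t]
      rw [hmap, tsum_congr hstep]
      have h0 := Summable.tsum_eq_zero_add (hsummable w)
      have h0' : F w = Y.mulVec (e w) + ∑' t : ℕ, (Y ^ (t+2)).mulVec (e w) := by
        rw [hFw]
        simpa [pow_one] using h0
      rw [h0', add_sub_cancel_left]
    have hYe : Y.mulVec (e w) = X.mulVec (e w) - pi := by
      rw [hY, Matrix.sub_mulVec, hQe]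
    rw [Matrix.mulVec_mulVec, hLD, Matrix.sub_mulVec, Matrix.smul_mulVec,
      Matrix.smul_mulVec, Matrix.one_mulVec, hsig w, Matrix.mulVec_smul,
      smul_smul, smul_smul]
    norm_num
    rw [Matrix.mulVec_add, Matrix.mulVec_sub, hXpi, hTXF, hYe]
    abel
  -- conclusion
  have hLh : L.mulVec (Dinv.mulVec (sigma u) - Dinv.mulVec (sigma v)) = e u - e v := by
    rw [Matrix.mulVec_sub, hkey u, hkey v]
    abel
  have hLg : L.mulVec (Lp.mulVec (e u - e v)) = e u - e v := by
    conv_lhs => rw [← hLh]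
    rw [Matrix.mulVec_mulVec, Matrix.mulVec_mulVec, hmp1]
    exact hLh
  obtain ⟨c, hc⟩ := hker
    (Dinv.mulVec (sigma u) - Dinv.mulVec (sigma v) - Lp.mulVec (e u - e v))
    (by rw [Matrix.mulVec_sub, hLh, hLg, sub_self])
  have hdot : ∀ z : Fin n → ℝ, (e u - e v) ⬝ᵥ z = z u - z v := by
    intro z
    show (Pi.single u 1 - Pi.single v 1) ⬝ᵥ z = z u - z v
    rw [sub_dotProduct, single_dotProduct, single_dotProduct,
      one_mul, one_mul]
  show (e u - e v) ⬝ᵥ Lp.mulVec (e u - e v)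
      = (Dinv.mulVec (sigma u)) u - (Dinv.mulVec (sigma u)) v
        - (Dinv.mulVec (sigma v)) u + (Dinv.mulVec (sigma v)) v
  rw [hdot]
  have hgu := hc u
  have hgv := hc v
  simp only [Pi.sub_apply] at hgu hgv
  linarith [hgu, hgv]
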